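/- arXiv:2402.08269 — 5 statements merged into one kernel-verified Lean document; each statement's English description precedes it below -/
import Mathlib

section
/- Let x⁽¹⁾ < ⋯ < x⁽ⁿ⁾ be real numbers with n ≥ 2. For each i ∈ {1,…,n}, the set of (w,b) ∈ ℝ² such that for all j, (w·x⁽ʲ⁾ + b ≥ 0 ⟺ j ≥ i) equals the set {λ((1−t)(1,−x⁽ⁱ⁻¹⁾) + t(1,−x⁽ⁱ⁾)) : λ > 0, t ∈ (0,1]} when i ≥ 2, i.e., the open-closed conical segment between (1,−x⁽ⁱ⁻¹⁾) and (1,−x⁽ⁱ⁾) scaled by positive reals. -/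
/-- The activation region of the suffix pattern with first 1 at (0-based) position `i ≥ 1`
equals the conical open-closed segment `ℝ_{>0}((1,−x^{(i−1)}), (1,−x^{(i)})]`. -/
theorem stmt2 (n : ℕ) (hn : 2 ≤ n) (x : Fin n → ℝ) (hx : StrictMono x)
    (i : Fin n) (hi : 1 ≤ (i : ℕ)) :
    {p : ℝ × ℝ | ∀ j : Fin n, (0 ≤ p.1 * x j + p.2 ↔ i ≤ j)} =
      {p : ℝ × ℝ | ∃ lam > (0 : ℝ), ∃ t ∈ Set.Ioc (0 : ℝ) 1,
        p = lam • ((1 - t) • ((1 : ℝ), -x ⟨(i : ℕ) - 1, lt_of_le_of_lt (Nat.sub_le _ _) i.isLt⟩)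
              + t • ((1 : ℝ), -x i))} := by
  set i' : Fin n := ⟨(i : ℕ) - 1, lt_of_le_of_lt (Nat.sub_le _ _) i.isLt⟩ with hi'def
  have hi' : i' < i := by simp only [Fin.lt_def, hi'def]; omega
  have hab : x i' < x i := hx hi'
  ext p
  simp only [Set.mem_setOf_eq]
  constructor
  · intro h
    have h1 : 0 ≤ p.1 * x i + p.2 := (h i).mpr le_rfl
    have h2 : p.1 * x i' + p.2 < 0 := by
      by_contra hc
      push_neg at hc
      exact absurd ((h i').mp hc) (not_le.mpr hi')
    have hw : 0 < p.1 := by nlinarith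
    refine ⟨p.1, hw, (-p.2 / p.1 - x i') / (x i - x i'), ⟨?_, ?_⟩, ?_⟩
    · apply div_pos _ (sub_pos.mpr hab)
      rw [sub_pos, lt_div_iff₀ hw]
      nlinarith
    · rw [div_le_one (sub_pos.mpr hab)]
      have : -p.2 / p.1 ≤ x i := by rw [div_le_iff₀ hw]; nlinarith
      linarith
    · have hne : x i - x i' ≠ 0 := ne_of_gt (sub_pos.mpr hab)
      have hpne : p.1 ≠ 0 := ne_of_gt hw
      apply Prod.ext
      · simp
      · simp only [Prod.smul_snd, Prod.snd_add, smul_eq_mul, Prod.mk_add_mk, Prod.smul_mk,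
          Prod.snd_mul]
        field_simp
        ring
  · rintro ⟨lam, hlam, t, ⟨ht0, ht1⟩, rfl⟩
    intro j
    simp only [Prod.smul_fst, Prod.smul_snd, Prod.fst_add, Prod.snd_add, smul_eq_mul,
      Prod.mk_add_mk, Prod.smul_mk, Prod.fst_mul, Prod.snd_mul]
    constructor
    · intro h0
      by_contra hji
      push_neg at hji
      have hjle : x j ≤ x i' := by
        apply hx.monotone
        simp only [Fin.le_def, hi'def, Fin.lt_def] at hji ⊢
        omega
      have hc : x j < (1 - t) * x i' + t * x i := by
        nlinarith [mul_pos ht0 (sub_pos.mpr hab)]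
      nlinarith [mul_pos hlam (sub_pos.mpr hc)]
    · intro hij
      have hjge : x i ≤ x j := hx.monotone hij
      have hc : (1 - t) * x i' + t * x i ≤ x j := by
        nlinarith [mul_nonneg (by linarith : (0:ℝ) ≤ 1 - t) (le_of_lt (sub_pos.mpr hab))]
      nlinarith [mul_nonneg hlam.le (sub_nonneg.mpr hc)]
end

section
/- Let x⁽¹⁾ < ⋯ < x⁽ⁿ⁾ be real numbers with n ≥ 2. The 2n activation regions (the sets of (w,b) ∈ ℝ² realizing each of the 2n monotone activation patterns on the sample) are pairwise disjoint, cover all of ℝ², and each one is a convex cone closed under multiplication by positive scalars. -/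
/-- The 2n activation regions (for the n suffix patterns `j ↦ (i ≤ j)` and the n prefix
patterns `j ↦ (j < i)`) are pairwise disjoint, cover ℝ², and each is a convex cone
closed under multiplication by positive scalars. -/
theorem stmt3 (n : ℕ) (hn : 2 ≤ n) (x : Fin n → ℝ) (hx : StrictMono x) :
    let pat : Fin n ⊕ Fin n → Fin n → Prop :=
      fun k j => Sum.elim (fun i : Fin n => i ≤ j) (fun i : Fin n => j < i) k
    let region : Fin n ⊕ Fin n → Set (ℝ × ℝ) :=
      fun k => {p : ℝ × ℝ | ∀ j : Fin n, (0 ≤ p.1 * x j + p.2 ↔ pat k j)}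
    (∀ k k' : Fin n ⊕ Fin n, k ≠ k' → region k ∩ region k' = ∅) ∧
    (⋃ k, region k) = Set.univ ∧
    (∀ k, Convex ℝ (region k) ∧ ∀ c : ℝ, 0 < c → ∀ p ∈ region k, c • p ∈ region k) := by
  classical
  intro pat region
  refine ⟨?_, ?_, ?_⟩
  · intro k k' hkk'
    ext p
    simp only [Set.mem_inter_iff, Set.mem_empty_iff_false, iff_false, not_and]
    intro hp hp'
    have key : ∀ j, pat k j ↔ pat k' j := fun j => (hp j).symm.trans (hp' j)
    simp only [pat, Sum.elim_inl, Sum.elim_inr] at key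
    exfalso; apply hkk'
    match k, k' with
    | Sum.inl i, Sum.inl i' =>
      have h1 := (key i).mp le_rfl
      have h2 := (key i').mpr le_rfl
      exact congrArg Sum.inl (le_antisymm h2 h1)
    | Sum.inl i, Sum.inr i' =>
      have h1 : i < i' := (key i).mp le_rfl
      exact absurd ((key i').mp h1.le) (lt_irrefl i')
    | Sum.inr i, Sum.inl i' =>
      have h1 : i' < i := (key i').mpr le_rfl
      exact absurd ((key i).mpr h1.le) (lt_irrefl i)
    | Sum.inr i, Sum.inr i' =>
      have h1 : ¬ i < i' := fun h => absurd ((key i).mpr h) (lt_irrefl i)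
      have h2 : ¬ i' < i := fun h => absurd ((key i').mp h) (lt_irrefl i')
      exact congrArg Sum.inr (le_antisymm (not_lt.mp h2) (not_lt.mp h1))
  · ext p
    simp only [Set.mem_iUnion, Set.mem_univ, iff_true]
    rcases le_or_gt 0 p.1 with hw | hw
    · by_cases h : ∃ j, 0 ≤ p.1 * x j + p.2
      · set s := Finset.univ.filter (fun j => 0 ≤ p.1 * x j + p.2) with hs
        have hsne : s.Nonempty := by obtain ⟨j, hj⟩ := h; exact ⟨j, by simp [hs, hj]⟩
        set i := s.min' hsne with hi_def
        refine ⟨Sum.inl i, fun j => ?_⟩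
        simp only [pat, region, Sum.elim_inl]
        constructor
        · intro hj; exact s.min'_le j (by simp [hs, hj])
        · intro hij
          have hxi : x i ≤ x j := hx.monotone hij
          have hi : 0 ≤ p.1 * x i + p.2 := by
            have := s.min'_mem hsne
            simp only [hs, Finset.mem_filter] at this
            exact this.2
          nlinarith [mul_nonneg hw (sub_nonneg.mpr hxi)]
      · push_neg at h
        refine ⟨Sum.inr ⟨0, by omega⟩, fun j => ?_⟩
        simp only [pat, region, Sum.elim_inr]
        constructor
        · intro hj; exact absurd hj (not_le.mpr (h j))
        · intro hj; exact absurd hj (by simp [Fin.lt_def])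
    · by_cases h : ∃ j, p.1 * x j + p.2 < 0
      · set s := Finset.univ.filter (fun j => p.1 * x j + p.2 < 0) with hs
        have hsne : s.Nonempty := by obtain ⟨j, hj⟩ := h; exact ⟨j, by simp [hs, hj]⟩
        set i := s.min' hsne with hi_def
        have hi : p.1 * x i + p.2 < 0 := by
          have := s.min'_mem hsne
          simp only [hs, Finset.mem_filter] at this
          exact this.2
        refine ⟨Sum.inr i, fun j => ?_⟩
        simp only [pat, region, Sum.elim_inr]
        constructor
        · intro hj
          by_contra hij
          push_neg at hij
          have hxi : x i ≤ x j := hx.monotone hij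
          nlinarith [mul_nonneg (sub_nonneg.mpr hxi) (neg_nonneg.mpr hw.le)]
        · intro hij
          by_contra hj
          push_neg at hj
          have hmem : j ∈ s := by simp [hs, hj]
          exact absurd (s.min'_le j hmem) (not_le.mpr hij)
      · push_neg at h
        refine ⟨Sum.inl ⟨0, by omega⟩, fun j => ?_⟩
        simp only [pat, region, Sum.elim_inl]
        simp [h j, Fin.le_def]
  · intro k
    constructor
    · intro p hp q hq a b ha hb hab
      intro j
      have hpj := hp j
      have hqj := hq j
      have hval : (a • p + b • q).1 * x j + (a • p + b • q).2
          = a * (p.1 * x j + p.2) + b * (q.1 * x j + q.2) := by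
        simp only [Prod.fst_add, Prod.snd_add, Prod.smul_fst, Prod.smul_snd, smul_eq_mul]
        ring
      show 0 ≤ (a • p + b • q).1 * x j + (a • p + b • q).2 ↔ pat k j
      rw [hval]
      by_cases hpat : pat k j
      · simp only [hpat, iff_true] at hpj hqj ⊢
        have h1 := mul_nonneg ha hpj
        have h2 := mul_nonneg hb hqj
        linarith
      · simp only [hpat, iff_false, not_le] at hpj hqj ⊢
        rcases ha.lt_or_eq with ha' | ha'
        · nlinarith [mul_neg_of_pos_of_neg ha' hpj, mul_nonneg hb (neg_nonneg.2 hqj.le)]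
        · have ha0 : a = 0 := ha'.symm
          have hb1 : b = 1 := by linarith
          rw [ha0, hb1]; linarith
    · intro c hc p hp j
      have hpj := hp j
      have hval : (c • p).1 * x j + (c • p).2 = c * (p.1 * x j + p.2) := by
        simp only [Prod.smul_fst, Prod.smul_snd, smul_eq_mul]
        ring
      show 0 ≤ (c • p).1 * x j + (c • p).2 ↔ pat k j
      rw [hval, mul_nonneg_iff_of_pos_left hc]
      exact hpj
end

section
/- Let x⁽¹⁾ < ⋯ < x⁽ⁿ⁾ be reals, n ≥ 2, and for 2 ≤ i ≤ n let e_{i−1} = σ(X − x⁽ⁱ⁻¹⁾·1) and e_i = σ(X − x⁽ⁱ⁾·1) where X = (x⁽¹⁾,…,x⁽ⁿ⁾), 1 is the all-ones vector, and σ is applied entrywise as max(·,0). Then {σ(wX + b·1) : (w,b) realizes activation pattern (0,…,0,1,…,1) with first 1 at position i} = {λ((1−t)e_{i−1} + t·e_i) : λ > 0, t ∈ (0,1]}. -/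
lemma key4 (a b t y : ℝ) (ht0 : 0 < t) (ht1 : t ≤ 1)
    (hy : y ≤ a ∨ b ≤ y) (hab : a < b) :
    max (y - ((1 - t) * a + t * b)) 0 = (1 - t) * max (y - a) 0 + t * max (y - b) 0 := by
  rcases hy with hy | hy
  · rw [max_eq_right (by nlinarith), max_eq_right (by nlinarith),
      max_eq_right (by nlinarith)]
    ring
  · rw [max_eq_left (by nlinarith), max_eq_left (by nlinarith),
      max_eq_left (by nlinarith)]
    ring

/-- The hidden-layer image of the sample over the activation region of the suffix pattern
with first 1 at (0-based) position `i ≥ 1` equals the conical segment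
`ℝ_{>0}(e_{i−1}, e_i]` where `e_k = σ(X − x^{(k)}·1)`. -/
theorem stmt4 (n : ℕ) (hn : 2 ≤ n) (x : Fin n → ℝ) (hx : StrictMono x)
    (i : Fin n) (hi : 1 ≤ (i : ℕ)) :
    {v : Fin n → ℝ | ∃ w b : ℝ, (∀ j : Fin n, (0 ≤ w * x j + b ↔ i ≤ j)) ∧
        v = fun j => max (w * x j + b) 0} =
      {v : Fin n → ℝ | ∃ lam > (0 : ℝ), ∃ t ∈ Set.Ioc (0 : ℝ) 1,
        v = lam • ((1 - t) • (fun j =>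
              max (x j - x ⟨(i : ℕ) - 1, lt_of_le_of_lt (Nat.sub_le _ _) i.isLt⟩) 0)
            + t • (fun j => max (x j - x i) 0))} := by
  set i1 : Fin n := ⟨(i : ℕ) - 1, lt_of_le_of_lt (Nat.sub_le _ _) i.isLt⟩ with hi1
  have hlt : i1 < i := by
    rw [Fin.lt_def]
    simp only [hi1]
    omega
  have hab : x i1 < x i := hx hlt
  have hyj : ∀ j : Fin n, x j ≤ x i1 ∨ x i ≤ x j := by
    intro j
    rcases le_or_gt i j with h | h
    · exact Or.inr (hx.monotone h)
    · left
      apply hx.monotone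
      rw [Fin.le_def]
      have hj : (j : ℕ) < (i : ℕ) := h
      simp only [hi1]
      omega
  ext v
  simp only [Set.mem_setOf_eq]
  constructor
  · rintro ⟨w, b, hpat, rfl⟩
    have hwi : 0 ≤ w * x i + b := (hpat i).mpr le_rfl
    have hwi1 : w * x i1 + b < 0 := not_le.mp (by rw [hpat i1]; exact not_le.mpr hlt)
    have hw : 0 < w := by
      by_contra h
      push_neg at h
      nlinarith
    set c : ℝ := -b / w with hc
    have hcw : w * c = -b := by rw [hc]; field_simp
    have hac : x i1 < c := by rw [hc, lt_div_iff₀ hw]; nlinarith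
    have hcb : c ≤ x i := by rw [hc, div_le_iff₀ hw]; nlinarith
    set t : ℝ := (c - x i1) / (x i - x i1) with htdef
    have ht0 : 0 < t := div_pos (by linarith) (by linarith)
    have ht1 : t ≤ 1 := (div_le_one (by linarith)).mpr (by linarith)
    have hmul : t * (x i - x i1) = c - x i1 :=
      div_mul_cancel₀ _ (by linarith)
    have hctb : (1 - t) * x i1 + t * x i = c := by linear_combination hmul
    refine ⟨w, hw, t, ⟨ht0, ht1⟩, ?_⟩
    funext j
    have hkey := key4 (x i1) (x i) t (x j) ht0 ht1 (hyj j) hab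
    rw [hctb] at hkey
    simp only [Pi.smul_apply, Pi.add_apply, smul_eq_mul]
    rw [← hkey]
    have h1 : w * (x j - c) = w * x j + b := by rw [mul_sub, hcw]; ring
    rw [← h1, ← mul_zero w, ← mul_max_of_nonneg _ _ hw.le, mul_zero]
  · rintro ⟨lam, hlam, t, ⟨ht0, ht1⟩, rfl⟩
    set c : ℝ := (1 - t) * x i1 + t * x i with hc
    have hac : x i1 < c := by rw [hc]; nlinarith
    have hcb : c ≤ x i := by rw [hc]; nlinarith
    refine ⟨lam, -(lam * c), ?_, ?_⟩
    · intro j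
      constructor
      · intro h
        by_contra hij
        push_neg at hij
        have hxj : x j ≤ x i1 := by
          apply hx.monotone
          rw [Fin.le_def]
          have hj : (j : ℕ) < (i : ℕ) := hij
          simp only [hi1]
          omega
        nlinarith
      · intro h
        have : x i ≤ x j := hx.monotone h
        nlinarith
    · funext j
      have hkey := key4 (x i1) (x i) t (x j) ht0 ht1 (hyj j) hab
      simp only [Pi.smul_apply, Pi.add_apply, smul_eq_mul]
      rw [← hc] at hkey
      rw [← hkey]
      have h1 : lam * (x j - c) = lam * x j + -(lam * c) := by ring
      rw [← h1, ← mul_zero lam, ← mul_max_of_nonneg _ _ hlam.le, mul_zero]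
end

section
/- Let x⁽¹⁾ < ⋯ < x⁽ⁿ⁾ be reals (n ≥ 2) and consider a one-hidden-layer scalar ReLU network with N₁ hidden neurons at a parameter θ in the interior of its activation region. Let r be the rank of the differential of θ' ↦ (f_{θ'}(x⁽¹⁾),…,f_{θ'}(x⁽ⁿ⁾)) at θ, and let A(X,θ) be the set of distinct hidden-layer activation patterns {a(x⁽ⁱ⁾,θ) : i = 1,…,n} ⊆ {0,1}^{N₁}. Then ½·|A(X,θ)| ≤ r ≤ 2·|A(X,θ)|. -/
open Finset

section Helpers

private def phi3 {n : ℕ} (x : Fin n → ℝ) (i₀ i₁ i₂ : Fin n) : (Fin n → ℝ) →ₗ[ℝ] ℝ where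
  toFun v := (v i₂ - v i₁) * (x i₁ - x i₀) - (v i₁ - v i₀) * (x i₂ - x i₁)
  map_add' u v := by simp only [Pi.add_apply]; ring
  map_smul' c v := by simp only [Pi.smul_apply, smul_eq_mul, RingHom.id_apply]; ring

private lemma phi3_apply {n : ℕ} (x : Fin n → ℝ) (i₀ i₁ i₂ : Fin n) (v : Fin n → ℝ) :
    phi3 x i₀ i₁ i₂ v = (v i₂ - v i₁) * (x i₁ - x i₀) - (v i₁ - v i₀) * (x i₂ - x i₁) := rfl

private lemma flip_phi {n : ℕ} (x : Fin n → ℝ) (hx : StrictMono x) (wk bk : ℝ)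
    (hsign : ∀ i : Fin n, wk * x i + bk ≠ 0)
    (p : ℕ) (hp1 : p + 1 < n)
    (hflip : ¬ ((0 ≤ wk * x ⟨p, by omega⟩ + bk) ↔ (0 ≤ wk * x ⟨p + 1, hp1⟩ + bk))) :
    (∀ i₀ i₁ i₂ : Fin n, i₀ < i₁ → i₁ < i₂ → (i₂.1 ≤ p ∨ p + 1 ≤ i₀.1) →
      phi3 x i₀ i₁ i₂ (fun i => (if 0 ≤ wk * x i + bk then (1:ℝ) else 0) * (wk * x i + bk)) = 0)
    ∧ (∀ i₀ i₁ i₂ : Fin n, i₀.1 + 1 = i₁.1 → i₁.1 + 1 = i₂.1 → (i₁.1 = p ∨ i₁.1 = p + 1) →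
      phi3 x i₀ i₁ i₂ (fun i => (if 0 ≤ wk * x i + bk then (1:ℝ) else 0) * (wk * x i + bk)) ≠ 0) := by
  set uv : Fin n → ℝ := fun i => (if 0 ≤ wk * x i + bk then (1:ℝ) else 0) * (wk * x i + bk) with huv
  have hxy : x ⟨p, by omega⟩ < x ⟨p + 1, hp1⟩ := hx (by simp [Fin.lt_def])
  rcases lt_or_gt_of_ne (hsign ⟨p, by omega⟩) with hneg | hpos
  · have hpos1 : 0 < wk * x ⟨p + 1, hp1⟩ + bk := by
      rcases lt_or_gt_of_ne (hsign ⟨p + 1, hp1⟩) with h | h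
      · exact absurd (iff_of_false (by linarith) (by linarith)) hflip
      · exact h
    have hw : 0 < wk := by nlinarith
    have hlow : ∀ i : Fin n, i.1 ≤ p → wk * x i + bk < 0 := by
      intro i hi
      have : x i ≤ x ⟨p, by omega⟩ := hx.monotone (by simp [Fin.le_def, hi])
      nlinarith
    have hhigh : ∀ i : Fin n, p + 1 ≤ i.1 → 0 < wk * x i + bk := by
      intro i hi
      have : x ⟨p + 1, hp1⟩ ≤ x i := hx.monotone (by simp [Fin.le_def, hi])
      nlinarith
    have huv0 : ∀ i : Fin n, i.1 ≤ p → uv i = 0 := by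
      intro i hi; simp only [huv]; rw [if_neg (by push_neg; exact hlow i hi)]; ring
    have huvp : ∀ i : Fin n, p + 1 ≤ i.1 → uv i = wk * x i + bk := by
      intro i hi; simp only [huv]; rw [if_pos (le_of_lt (hhigh i hi))]; ring
    constructor
    · intro i₀ i₁ i₂ h01 h12 hside
      have h01' : i₀.1 < i₁.1 := h01
      have h12' : i₁.1 < i₂.1 := h12
      rcases hside with h | h
      · rw [phi3_apply, huv0 i₀ (by omega), huv0 i₁ (by omega), huv0 i₂ (by omega)]; ring
      · rw [phi3_apply, huvp i₀ (by omega), huvp i₁ (by omega), huvp i₂ (by omega)]; ring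
    · intro i₀ i₁ i₂ h01 h12 hcase
      have hx01 : x i₀ < x i₁ := hx (by rw [Fin.lt_def]; omega)
      have hx12 : x i₁ < x i₂ := hx (by rw [Fin.lt_def]; omega)
      rcases hcase with h | h
      · rw [phi3_apply, huv0 i₀ (by omega), huv0 i₁ (by omega), huvp i₂ (by omega)]
        have := hhigh i₂ (by omega)
        apply ne_of_gt; nlinarith
      · rw [phi3_apply, huv0 i₀ (by omega), huvp i₁ (by omega), huvp i₂ (by omega)]
        have := hlow i₀ (by omega)
        apply ne_of_gt; nlinarith
  · have hneg1 : wk * x ⟨p + 1, hp1⟩ + bk < 0 := by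
      rcases lt_or_gt_of_ne (hsign ⟨p + 1, hp1⟩) with h | h
      · exact h
      · exact absurd (iff_of_true (by linarith) (by linarith)) hflip
    have hw : wk < 0 := by nlinarith
    have hlow : ∀ i : Fin n, i.1 ≤ p → 0 < wk * x i + bk := by
      intro i hi
      have : x i ≤ x ⟨p, by omega⟩ := hx.monotone (by simp [Fin.le_def, hi])
      nlinarith
    have hhigh : ∀ i : Fin n, p + 1 ≤ i.1 → wk * x i + bk < 0 := by
      intro i hi
      have : x ⟨p + 1, hp1⟩ ≤ x i := hx.monotone (by simp [Fin.le_def, hi])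
      nlinarith
    have huv0 : ∀ i : Fin n, p + 1 ≤ i.1 → uv i = 0 := by
      intro i hi; simp only [huv]; rw [if_neg (by push_neg; exact hhigh i hi)]; ring
    have huvp : ∀ i : Fin n, i.1 ≤ p → uv i = wk * x i + bk := by
      intro i hi; simp only [huv]; rw [if_pos (le_of_lt (hlow i hi))]; ring
    constructor
    · intro i₀ i₁ i₂ h01 h12 hside
      have h01' : i₀.1 < i₁.1 := h01
      have h12' : i₁.1 < i₂.1 := h12
      rcases hside with h | h
      · rw [phi3_apply, huvp i₀ (by omega), huvp i₁ (by omega), huvp i₂ (by omega)]; ring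
      · rw [phi3_apply, huv0 i₀ (by omega), huv0 i₁ (by omega), huv0 i₂ (by omega)]; ring
    · intro i₀ i₁ i₂ h01 h12 hcase
      have hx01 : x i₀ < x i₁ := hx (by rw [Fin.lt_def]; omega)
      have hx12 : x i₁ < x i₂ := hx (by rw [Fin.lt_def]; omega)
      rcases hcase with h | h
      · rw [phi3_apply, huvp i₀ (by omega), huvp i₁ (by omega), huv0 i₂ (by omega)]
        have := hhigh i₂ (by omega)
        apply ne_of_gt; nlinarith
      · rw [phi3_apply, huvp i₀ (by omega), huv0 i₁ (by omega), huv0 i₂ (by omega)]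
        have := hlow i₀ (by omega)
        apply ne_of_gt; nlinarith

private abbrev EE (N₁ : ℕ) := (Fin N₁ → ℝ) × (Fin N₁ → ℝ) × (Fin N₁ → ℝ) × ℝ

private noncomputable def cw {N₁ : ℕ} (k : Fin N₁) : EE N₁ →L[ℝ] ℝ :=
  (ContinuousLinearMap.proj k).comp (ContinuousLinearMap.fst ℝ _ _)

private noncomputable def cV {N₁ : ℕ} (k : Fin N₁) : EE N₁ →L[ℝ] ℝ :=
  (ContinuousLinearMap.proj k).comp
    ((ContinuousLinearMap.fst ℝ _ _).comp (ContinuousLinearMap.snd ℝ _ _))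

private noncomputable def cb {N₁ : ℕ} (k : Fin N₁) : EE N₁ →L[ℝ] ℝ :=
  (ContinuousLinearMap.proj k).comp
    ((ContinuousLinearMap.fst ℝ _ _).comp
      ((ContinuousLinearMap.snd ℝ _ _).comp (ContinuousLinearMap.snd ℝ _ _)))

private noncomputable def cc {N₁ : ℕ} : EE N₁ →L[ℝ] ℝ :=
  (ContinuousLinearMap.snd ℝ _ _).comp
    ((ContinuousLinearMap.snd ℝ _ _).comp (ContinuousLinearMap.snd ℝ _ _))

private lemma cw_apply {N₁ : ℕ} (k : Fin N₁) (θ : EE N₁) : cw k θ = θ.1 k := rfl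
private lemma cV_apply {N₁ : ℕ} (k : Fin N₁) (θ : EE N₁) : cV k θ = θ.2.1 k := rfl
private lemma cb_apply {N₁ : ℕ} (k : Fin N₁) (θ : EE N₁) : cb k θ = θ.2.2.1 k := rfl
private lemma cc_apply {N₁ : ℕ} (θ : EE N₁) : cc θ = θ.2.2.2 := rfl

private noncomputable def Dmap {n N₁ : ℕ} (x : Fin n → ℝ) (w V b : Fin N₁ → ℝ) :
    EE N₁ →L[ℝ] (Fin n → ℝ) :=
  ContinuousLinearMap.pi fun i =>
    (∑ k, (V k • ((if 0 ≤ w k * x i + b k then (1:ℝ) else 0) • (x i • cw k + cb k)) +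
      ((if 0 ≤ w k * x i + b k then (1:ℝ) else 0) * (w k * x i + b k)) • cV k)) + cc

private lemma Dmap_apply {n N₁ : ℕ} (x : Fin n → ℝ) (w V b : Fin N₁ → ℝ) (h : EE N₁)
    (i : Fin n) :
    Dmap x w V b h i = (∑ k, (if 0 ≤ w k * x i + b k then (1:ℝ) else 0) *
      (h.2.1 k * (w k * x i + b k) + V k * (h.1 k * x i + h.2.2.1 k))) + h.2.2.2 := by
  simp only [Dmap, ContinuousLinearMap.pi_apply, ContinuousLinearMap.add_apply,
    ContinuousLinearMap.coe_sum', Finset.sum_apply, ContinuousLinearMap.add_apply,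
    ContinuousLinearMap.smul_apply, smul_eq_mul, cw_apply, cV_apply, cb_apply, cc_apply]
  congr 1
  apply Finset.sum_congr rfl
  intro k _
  ring

private lemma hasfd {n N₁ : ℕ} (x : Fin n → ℝ) (w V b : Fin N₁ → ℝ) (c : ℝ) :
    HasFDerivAt (fun θ : EE N₁ => fun i =>
      (∑ k, θ.2.1 k * ((if 0 ≤ w k * x i + b k then (1:ℝ) else 0) * (θ.1 k * x i + θ.2.2.1 k)))
        + θ.2.2.2)
      (Dmap x w V b) (w, V, b, c) := by
  apply hasFDerivAt_pi''
  intro i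
  rw [show (ContinuousLinearMap.proj i).comp (Dmap x w V b) =
    (∑ k, (V k • ((if 0 ≤ w k * x i + b k then (1:ℝ) else 0) • (x i • cw k + cb k)) +
      ((if 0 ≤ w k * x i + b k then (1:ℝ) else 0) * (w k * x i + b k)) • cV k)) + cc
    from ContinuousLinearMap.proj_pi _ _]
  apply HasFDerivAt.add
  · apply HasFDerivAt.fun_sum
    intro k _
    have h1 : HasFDerivAt (fun θ : EE N₁ => θ.1 k * x i + θ.2.2.1 k)
        (x i • cw k + cb k) (w, V, b, c) :=
      ((cw k).hasFDerivAt.mul_const (x i)).add ((cb k).hasFDerivAt)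
    have h2 : HasFDerivAt (fun θ : EE N₁ =>
        (if 0 ≤ w k * x i + b k then (1:ℝ) else 0) * (θ.1 k * x i + θ.2.2.1 k))
        ((if 0 ≤ w k * x i + b k then (1:ℝ) else 0) • (x i • cw k + cb k)) (w, V, b, c) :=
      h1.const_mul _
    exact (cV k).hasFDerivAt.mul h2
  · exact cc.hasFDerivAt

end Helpers

set_option maxHeartbeats 1000000 in
/-- For a shallow ReLU network at a parameter in the interior of its activation region,
the local dimension `r` (the rank of the differential of the sample map) satisfies
`½·|A(X,θ)| ≤ r ≤ 2·|A(X,θ)|`, where `A(X,θ)` is the set of distinct hidden-layer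
activation patterns seen by the sample. -/
theorem stmt18 (n : ℕ) (hn : 2 ≤ n) (x : Fin n → ℝ) (hx : StrictMono x)
    (N₁ : ℕ) (w V b : Fin N₁ → ℝ) (c : ℝ)
    (F : ((Fin N₁ → ℝ) × (Fin N₁ → ℝ) × (Fin N₁ → ℝ) × ℝ) → (Fin n → ℝ))
    (hF : F = fun θ => fun i =>
      (∑ k, θ.2.1 k * max (θ.1 k * x i + θ.2.2.1 k) 0) + θ.2.2.2)
    (hint : (w, V, b, c) ∈ interior {θ : (Fin N₁ → ℝ) × (Fin N₁ → ℝ) × (Fin N₁ → ℝ) × ℝ |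
      ∀ k i, (0 ≤ θ.1 k * x i + θ.2.2.1 k ↔ 0 ≤ w k * x i + b k)}) :
    let r := Module.finrank ℝ (LinearMap.range
        ((fderiv ℝ F (w, V, b, c) :
            ((Fin N₁ → ℝ) × (Fin N₁ → ℝ) × (Fin N₁ → ℝ) × ℝ) →L[ℝ] (Fin n → ℝ)) :
          ((Fin N₁ → ℝ) × (Fin N₁ → ℝ) × (Fin N₁ → ℝ) × ℝ) →ₗ[ℝ] (Fin n → ℝ)))
    let Acard := (Finset.univ.image
      (fun i : Fin n => fun k : Fin N₁ => decide (0 ≤ w k * x i + b k))).card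
    Acard ≤ 2 * r ∧ r ≤ 2 * Acard := by
  intro r Acard
  -- strict signs everywhere
  have hsign : ∀ (k : Fin N₁) (i : Fin n), w k * x i + b k ≠ 0 := by
    intro k i h0
    obtain ⟨ε, hε, hball⟩ := Metric.mem_nhds_iff.1 (mem_interior_iff_mem_nhds.1 hint)
    have hd3 : dist (fun k' => b k' - ε / 2 : Fin N₁ → ℝ) b ≤ ε / 2 := by
      apply (dist_pi_le_iff (by positivity)).2
      intro k'
      have h4 : b k' - ε / 2 - b k' = -(ε / 2) := by ring
      rw [Real.dist_eq, h4, abs_neg, abs_of_nonneg (by positivity)]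
    have hmem : ((w, V, fun k' => b k' - ε / 2, c) :
        (Fin N₁ → ℝ) × (Fin N₁ → ℝ) × (Fin N₁ → ℝ) × ℝ) ∈
        Metric.ball ((w, V, b, c) : (Fin N₁ → ℝ) × (Fin N₁ → ℝ) × (Fin N₁ → ℝ) × ℝ) ε := by
      rw [Metric.mem_ball]
      have : dist ((w, V, fun k' => b k' - ε / 2, c) :
          (Fin N₁ → ℝ) × (Fin N₁ → ℝ) × (Fin N₁ → ℝ) × ℝ) (w, V, b, c) ≤ ε / 2 := by
        simp only [Prod.dist_eq, dist_self]
        exact max_le (by positivity) (max_le (by positivity) (max_le hd3 (by positivity)))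
      linarith
    have hS := hball hmem
    simp only [Set.mem_setOf_eq] at hS
    have h5 := (hS k i).2 (by rw [h0])
    linarith
  -- the derivative
  have hG := hasfd x w V b c
  have hFG : F =ᶠ[nhds ((w, V, b, c) : EE N₁)] (fun θ : EE N₁ => fun i =>
      (∑ k, θ.2.1 k * ((if 0 ≤ w k * x i + b k then (1:ℝ) else 0) * (θ.1 k * x i + θ.2.2.1 k)))
        + θ.2.2.2) := by
    apply Filter.eventuallyEq_of_mem (isOpen_interior.mem_nhds hint)
    intro θ hθ
    have hθS := interior_subset hθ
    simp only [Set.mem_setOf_eq] at hθS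
    rw [hF]
    funext i
    show (∑ k, θ.2.1 k * max (θ.1 k * x i + θ.2.2.1 k) 0) + θ.2.2.2 =
      (∑ k, θ.2.1 k * ((if 0 ≤ w k * x i + b k then (1:ℝ) else 0) * (θ.1 k * x i + θ.2.2.1 k)))
        + θ.2.2.2
    congr 1
    apply Finset.sum_congr rfl
    intro k _
    by_cases hcase : 0 ≤ w k * x i + b k
    · rw [if_pos hcase, one_mul, max_eq_left ((hθS k i).2 hcase)]
    · rw [if_neg hcase, zero_mul, mul_zero,
        max_eq_right (le_of_not_ge fun h => hcase ((hθS k i).1 h)), mul_zero]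
  have hFD : HasFDerivAt F (Dmap x w V b) ((w, V, b, c) : EE N₁) :=
    hG.congr_of_eventuallyEq hFG
  have hfder : fderiv ℝ F ((w, V, b, c) : EE N₁) = Dmap x w V b := hFD.fderiv
  have hr : r = Module.finrank ℝ (LinearMap.range
      ((Dmap x w V b : EE N₁ →L[ℝ] (Fin n → ℝ)) : EE N₁ →ₗ[ℝ] (Fin n → ℝ))) := by
    show Module.finrank ℝ _ = _
    rw [hfder]
  set L : EE N₁ →ₗ[ℝ] (Fin n → ℝ) :=
    ((Dmap x w V b : EE N₁ →L[ℝ] (Fin n → ℝ)) : EE N₁ →ₗ[ℝ] (Fin n → ℝ)) with hLdef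
  have hL : ∀ (h : EE N₁) (i : Fin n), L h i = (∑ k,
      (if 0 ≤ w k * x i + b k then (1:ℝ) else 0) *
      (h.2.1 k * (w k * x i + b k) + V k * (h.1 k * x i + h.2.2.1 k))) + h.2.2.2 :=
    fun h i => Dmap_apply x w V b h i
  have hAcard0 : Acard = (Finset.univ.image
      (fun i : Fin n => fun k : Fin N₁ => decide (0 ≤ w k * x i + b k))).card := rfl
  clear_value r Acard
  clear hG hFG hFD hfder hF hint F
  constructor
  · -- lower bound
    have hone : (fun _ : Fin n => (1:ℝ)) ∈ LinearMap.range L := by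
      refine ⟨((0, 0, 0, 1) : EE N₁), ?_⟩
      funext i
      rw [hL]
      simp
    have hu : ∀ k₀ : Fin N₁, (fun i : Fin n =>
        (if 0 ≤ w k₀ * x i + b k₀ then (1:ℝ) else 0) * (w k₀ * x i + b k₀)) ∈
        LinearMap.range L := by
      intro k₀
      refine ⟨((0, Pi.single k₀ 1, 0, 0) : EE N₁), ?_⟩
      funext i
      rw [hL]
      simp [Pi.single_apply, ite_mul, Finset.sum_ite_eq']
    have hr1 : 1 ≤ r := by
      rw [hr]
      have hne : (⟨fun _ : Fin n => (1:ℝ), hone⟩ : LinearMap.range L) ≠ 0 := by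
        intro hzz
        have := congrFun (congrArg Subtype.val hzz) ⟨0, by omega⟩
        simpa using this
      have hli : LinearIndependent ℝ
          (fun _ : Fin 1 => (⟨fun _ : Fin n => (1:ℝ), hone⟩ : LinearMap.range L)) :=
        linearIndependent_unique_iff.2 hne
      simpa using hli.fintype_card_le_finrank
    -- patterns as functions of natural index
    have hn1 : n - 1 < n := by omega
    set Pn : ℕ → (Fin N₁ → Bool) :=
      fun p => fun k => decide (0 ≤ w k * x ⟨min p (n-1), by omega⟩ + b k) with hPndef
    have hPn : ∀ i : Fin n, (fun k => decide (0 ≤ w k * x i + b k)) = Pn i.1 := by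
      intro i
      have hfe : (⟨min i.1 (n-1), by omega⟩ : Fin n) = i := by
        apply Fin.ext; simp; omega
      simp only [hPndef, hfe]
    set B : Finset ℕ := (Finset.range (n-1)).filter (fun p => Pn p ≠ Pn (p+1)) with hBdef
    -- Acard ≤ B.card + 1
    have hAB : Acard ≤ B.card + 1 := by
      have hinj : Acard ≤ (insert (n-1) B).card := by
        rw [hAcard0]
        apply Finset.card_le_card_of_injOn (fun a =>
          if hh : ((Finset.range n).filter (fun p => Pn p = a)).Nonempty
          then ((Finset.range n).filter (fun p => Pn p = a)).max' hh else 0)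
        · intro a ha
          obtain ⟨i, _, rfl⟩ := Finset.mem_image.1 ha
          have hne : ((Finset.range n).filter
              (fun p => Pn p = (fun k => decide (0 ≤ w k * x i + b k)))).Nonempty := by
            refine ⟨i.1, Finset.mem_filter.2 ⟨Finset.mem_range.2 i.2, ?_⟩⟩
            exact (hPn i).symm
          beta_reduce; rw [Finset.mem_coe, dif_pos hne]
          set g := ((Finset.range n).filter
            (fun p => Pn p = (fun k => decide (0 ≤ w k * x i + b k)))).max' hne with hgdef
          have hgmem := Finset.max'_mem _ hne
          rw [← hgdef] at hgmem
          have hg1 := Finset.mem_filter.1 hgmem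
          have hgn : g < n := Finset.mem_range.1 hg1.1
          by_cases hge : g = n - 1
          · rw [hge]; exact Finset.mem_insert_self _ _
          · apply Finset.mem_insert_of_mem
            rw [hBdef]
            refine Finset.mem_filter.2 ⟨Finset.mem_range.2 (by omega), ?_⟩
            intro heq
            have hmem2 : g + 1 ∈ (Finset.range n).filter
                (fun p => Pn p = (fun k => decide (0 ≤ w k * x i + b k))) := by
              refine Finset.mem_filter.2 ⟨Finset.mem_range.2 (by omega), ?_⟩
              rw [← heq]; exact hg1.2
            have := Finset.le_max' _ _ hmem2
            rw [← hgdef] at this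
            omega
        · intro a1 h1 a2 h2 heq
          obtain ⟨i1, _, rfl⟩ := Finset.mem_image.1 h1
          obtain ⟨i2, _, rfl⟩ := Finset.mem_image.1 h2
          have hne1 : ((Finset.range n).filter
              (fun p => Pn p = (fun k => decide (0 ≤ w k * x i1 + b k)))).Nonempty :=
            ⟨i1.1, Finset.mem_filter.2 ⟨Finset.mem_range.2 i1.2, (hPn i1).symm⟩⟩
          have hne2 : ((Finset.range n).filter
              (fun p => Pn p = (fun k => decide (0 ≤ w k * x i2 + b k)))).Nonempty :=
            ⟨i2.1, Finset.mem_filter.2 ⟨Finset.mem_range.2 i2.2, (hPn i2).symm⟩⟩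
          beta_reduce at heq
          rw [dif_pos hne1, dif_pos hne2] at heq
          have hm1 := Finset.mem_filter.1 (Finset.max'_mem _ hne1)
          have hm2 := Finset.mem_filter.1 (Finset.max'_mem _ hne2)
          rw [← hm1.2, ← hm2.2, heq]
      have := Finset.card_insert_le (n-1) B
      omega
    by_cases hsmall : B.card = 0 ∨ n < 3
    · -- small cases
      have hBle : B.card ≤ 1 := by
        rcases hsmall with h | h
        · omega
        · have := Finset.card_filter_le (Finset.range (n-1)) (fun p => Pn p ≠ Pn (p+1))
          rw [← hBdef] at this
          simp only [Finset.card_range] at this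
          omega
      omega
    · push_neg at hsmall
      obtain ⟨hB0, hn3⟩ := hsmall
      have hflipall : ∀ p ∈ B, ∃ k, Pn p k ≠ Pn (p+1) k := by
        intro p hp
        have := (Finset.mem_filter.1 hp).2
        exact Function.ne_iff.1 this
      have hBne : B.Nonempty := Finset.card_pos.1 (by omega)
      obtain ⟨p₀, hp₀⟩ := hBne
      have hN1 : Nonempty (Fin N₁) := ⟨(hflipall p₀ hp₀).choose⟩
      have hκex : ∃ κ : ℕ → Fin N₁, ∀ p ∈ B, Pn p (κ p) ≠ Pn (p+1) (κ p) := by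
        have hstep : ∀ p : ℕ, ∃ k : Fin N₁, p ∈ B → Pn p k ≠ Pn (p+1) k := by
          intro p
          by_cases hp : p ∈ B
          · obtain ⟨k, hk⟩ := hflipall p hp
            exact ⟨k, fun _ => hk⟩
          · exact ⟨Classical.arbitrary _, fun h => absurd h hp⟩
        choose κ hκ using hstep
        exact ⟨κ, fun p hp => hκ p hp⟩
      obtain ⟨κ, hκ⟩ := hκex
      set l : List ℕ := B.sort (· ≤ ·) with hldef
      have hlsort : l.Pairwise (· < ·) := List.sortedLT_iff_pairwise.1 (Finset.sortedLT_sort B)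
      have hllen : l.length = B.card := Finset.length_sort _
      have hmeml : ∀ q ∈ l, q ∈ B := fun q hq => (Finset.mem_sort _).1 hq
      set T : ℕ := (l.length + 1) / 2 with hTdef
      have hTlen : ∀ t : Fin T, 2 * t.1 < l.length := by intro t; have := t.2; omega
      have hJex : ∃ J : Fin T → ℕ, ∀ t, J t = l.get ⟨2 * t.1, hTlen t⟩ := ⟨_, fun _ => rfl⟩
      obtain ⟨J, hJdef⟩ := hJex
      have hJB : ∀ t, J t ∈ B := fun t => by rw [hJdef]; exact hmeml _ (List.get_mem l _)
      have hJr : ∀ t, J t + 1 < n := by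
        intro t
        have := (Finset.mem_filter.1 (hJB t)).1
        rw [Finset.mem_range] at this
        omega
      have hgap : ∀ t t' : Fin T, t.1 < t'.1 → J t + 2 ≤ J t' := by
        intro t t' h
        have hb1 : 2 * t.1 + 1 < l.length := by have := hTlen t'; omega
        have h1 : l.get ⟨2 * t.1, hTlen t⟩ < l.get ⟨2 * t.1 + 1, hb1⟩ :=
          (List.Pairwise.sortedLT hlsort).strictMono_get (by simp [Fin.lt_def])
        have h2 : l.get ⟨2 * t.1 + 1, hb1⟩ < l.get ⟨2 * t'.1, hTlen t'⟩ :=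
          (List.Pairwise.sortedLT hlsort).strictMono_get (by simp [Fin.lt_def]; omega)
        rw [hJdef t, hJdef t']
        omega
      have hvvex : ∃ vv : Option (Fin T) → (Fin n → ℝ),
          vv none = (fun _ : Fin n => (1:ℝ)) ∧ ∀ t : Fin T, vv (some t) = (fun i =>
            (if 0 ≤ w (κ (J t)) * x i + b (κ (J t)) then (1:ℝ) else 0) *
              (w (κ (J t)) * x i + b (κ (J t)))) :=
        ⟨fun o => Option.rec (fun _ : Fin n => (1:ℝ)) (fun t => fun i =>
            (if 0 ≤ w (κ (J t)) * x i + b (κ (J t)) then (1:ℝ) else 0) *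
              (w (κ (J t)) * x i + b (κ (J t)))) o, rfl, fun _ => rfl⟩
      obtain ⟨vv, hvnone, hvsome⟩ := hvvex
      have hvmem : ∀ o, vv o ∈ LinearMap.range L := by
        rintro (_ | t)
        · rw [hvnone]; exact hone
        · rw [hvsome]; exact hu _
      -- the key flip facts, packaged
      have hflipP : ∀ t : Fin T, ¬ ((0 ≤ w (κ (J t)) * x ⟨J t, by have := hJr t; omega⟩ + b (κ (J t)))
          ↔ (0 ≤ w (κ (J t)) * x ⟨J t + 1, hJr t⟩ + b (κ (J t)))) := by
        intro t hiff
        apply hκ (J t) (hJB t)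
        have h1 : (⟨min (J t) (n-1), by omega⟩ : Fin n) = ⟨J t, by have := hJr t; omega⟩ := by
          apply Fin.ext; simp; have := hJr t; omega
        have h2 : (⟨min (J t + 1) (n-1), by omega⟩ : Fin n) = ⟨J t + 1, hJr t⟩ := by
          apply Fin.ext; simp; have := hJr t; omega
        simp only [hPndef, h1, h2]
        exact decide_eq_decide.2 hiff
      have hindep : LinearIndependent ℝ vv := by
        rw [Fintype.linearIndependent_iff]
        intro g hg
        have hsome : ∀ t : Fin T, g (some t) = 0 := by
          intro t
          have hpn : J t + 1 < n := hJr t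
          obtain ⟨hA, hB2⟩ := flip_phi x hx (w (κ (J t))) (b (κ (J t)))
            (fun i => hsign (κ (J t)) i) (J t) hpn (hflipP t)
          obtain ⟨q, hqdef⟩ : ∃ q : ℕ, q = max (J t) 1 := ⟨_, rfl⟩
          have hq1 : 1 ≤ q := by omega
          have hqn : q + 1 < n := by omega
          obtain ⟨i₀, i₁, i₂, hi₀, hi₁, hi₂⟩ : ∃ i₀ i₁ i₂ : Fin n,
              i₀.1 = q - 1 ∧ i₁.1 = q ∧ i₂.1 = q + 1 :=
            ⟨⟨q - 1, by omega⟩, ⟨q, by omega⟩, ⟨q + 1, hqn⟩, rfl, rfl, rfl⟩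
          have happ := congrArg (phi3 x i₀ i₁ i₂) hg
          rw [map_sum, map_zero] at happ
          simp only [map_smul, smul_eq_mul] at happ
          rw [Finset.sum_eq_single (some t)] at happ
          · have hne : phi3 x i₀ i₁ i₂ (vv (some t)) ≠ 0 := by
              rw [hvsome t]
              exact hB2 i₀ i₁ i₂ (by omega) (by omega) (by omega)
            exact (mul_eq_zero.1 happ).resolve_right hne
          · rintro (_ | t') _ hne'
            · have hz : phi3 x i₀ i₁ i₂ (fun _ : Fin n => (1:ℝ)) = 0 := by
                rw [phi3_apply]; ring
              rw [hvnone, hz, mul_zero]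
            · have ht' : t' ≠ t := fun hh => hne' (by rw [hh])
              have hp'n : J t' + 1 < n := hJr t'
              obtain ⟨hA', _⟩ := flip_phi x hx (w (κ (J t'))) (b (κ (J t')))
                (fun i => hsign (κ (J t')) i) (J t') hp'n (hflipP t')
              have hcmp : t.1 < t'.1 ∨ t'.1 < t.1 := by
                rcases Nat.lt_or_ge t.1 t'.1 with h | h
                · exact Or.inl h
                · rcases Nat.lt_or_ge t'.1 t.1 with h2 | h2
                  · exact Or.inr h2
                  · exact absurd (Fin.ext (by omega)) ht'
              have hz : phi3 x i₀ i₁ i₂ (fun i =>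
                  (if 0 ≤ w (κ (J t')) * x i + b (κ (J t')) then (1:ℝ) else 0) *
                    (w (κ (J t')) * x i + b (κ (J t')))) = 0 := by
                rcases hcmp with h | h
                · have hgg := hgap t t' h
                  exact hA' i₀ i₁ i₂ (by rw [Fin.lt_def]; omega)
                    (by rw [Fin.lt_def]; omega) (Or.inl (by omega))
                · have hgg := hgap t' t h
                  exact hA' i₀ i₁ i₂ (by rw [Fin.lt_def]; omega)
                    (by rw [Fin.lt_def]; omega) (Or.inr (by omega))
              rw [hvsome t', hz, mul_zero]
          · intro hni
            exact absurd (Finset.mem_univ _) hni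
        intro o
        rcases o with _ | t
        · rw [Fintype.sum_option] at hg
          simp only [hsome, zero_smul, Finset.sum_const_zero, add_zero, hvnone] at hg
          have := congrFun hg ⟨0, by omega⟩
          simpa using this
        · exact hsome t
      have hcard : T + 1 ≤ r := by
        rw [hr]
        have hindep' : LinearIndependent ℝ
            (fun o : Option (Fin T) => (⟨vv o, hvmem o⟩ : LinearMap.range L)) := by
          apply LinearIndependent.of_comp ((LinearMap.range L).subtype)
          exact hindep
        have := hindep'.fintype_card_le_finrank
        simpa [Fintype.card_option] using this
      omega
  · -- upper bound
    rw [hr]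
    set Pf : Fin n → (Fin N₁ → Bool) := fun i => fun k => decide (0 ≤ w k * x i + b k) with hPf
    have hAcard : Acard = (Finset.univ.image Pf).card := hAcard0
    set ee : (Fin N₁ → Bool) → (Fin n → ℝ) := fun a i => if Pf i = a then 1 else 0 with hee
    set ff : (Fin N₁ → Bool) → (Fin n → ℝ) := fun a i => if Pf i = a then x i else 0 with hff
    set gens : Finset (Fin n → ℝ) :=
      (Finset.univ.image Pf).image ee ∪ (Finset.univ.image Pf).image ff with hgens
    have hrange : LinearMap.range L ≤ Submodule.span ℝ (gens : Set (Fin n → ℝ)) := by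
      rintro v ⟨h, rfl⟩
      have hv : L h = ∑ a ∈ Finset.univ.image Pf,
          ((((∑ k, (if a k then (1:ℝ) else 0) * (h.2.1 k * b k + V k * h.2.2.1 k)) + h.2.2.2) • ee a)
           + ((∑ k, (if a k then (1:ℝ) else 0) * (h.2.1 k * w k + V k * h.1 k)) • ff a)) := by
        funext i
        rw [hL h i, Finset.sum_apply, Finset.sum_eq_single (Pf i)]
        · have he1 : ee (Pf i) i = 1 := by simp [hee]
          have hf1 : ff (Pf i) i = x i := by simp [hff]
          simp only [Pi.add_apply, Pi.smul_apply, smul_eq_mul, he1, hf1, mul_one]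
          have ht : ∀ k : Fin N₁, (if Pf i k then (1:ℝ) else 0) =
              (if 0 ≤ w k * x i + b k then (1:ℝ) else 0) := by
            intro k; simp [hPf]
          simp only [ht]
          rw [show (∑ k, (if 0 ≤ w k * x i + b k then (1:ℝ) else 0) *
              (h.2.1 k * (w k * x i + b k) + V k * (h.1 k * x i + h.2.2.1 k)))
            = ∑ k, ((if 0 ≤ w k * x i + b k then (1:ℝ) else 0) *
                (h.2.1 k * b k + V k * h.2.2.1 k)
              + ((if 0 ≤ w k * x i + b k then (1:ℝ) else 0) *
                (h.2.1 k * w k + V k * h.1 k)) * x i) from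
            Finset.sum_congr rfl fun k _ => by ring]
          rw [Finset.sum_add_distrib, Finset.sum_mul]
          ring
        · intro a ha hne
          have he0 : ee a i = 0 := by
            simp only [hee]; rw [if_neg (fun hh => hne hh.symm)]
          have hf0 : ff a i = 0 := by
            simp only [hff]; rw [if_neg (fun hh => hne hh.symm)]
          simp [he0, hf0]
        · intro hni
          exact absurd (Finset.mem_image_of_mem Pf (Finset.mem_univ i)) hni
      rw [hv]
      apply Submodule.sum_mem
      intro a ha
      apply Submodule.add_mem
      · apply Submodule.smul_mem
        apply Submodule.subset_span
        simp only [hgens, Finset.coe_union, Set.mem_union, Finset.mem_coe]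
        exact Or.inl (Finset.mem_image_of_mem ee ha)
      · apply Submodule.smul_mem
        apply Submodule.subset_span
        simp only [hgens, Finset.coe_union, Set.mem_union, Finset.mem_coe]
        exact Or.inr (Finset.mem_image_of_mem ff ha)
    calc Module.finrank ℝ (LinearMap.range L)
        ≤ Module.finrank ℝ (Submodule.span ℝ (gens : Set (Fin n → ℝ))) :=
          Submodule.finrank_mono hrange
      _ ≤ gens.card := by simpa [Set.finrank] using finrank_span_finset_le_card gens
      _ ≤ 2 * Acard := by
          rw [hAcard]
          have h1 := Finset.card_union_le ((Finset.univ.image Pf).image ee)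
            ((Finset.univ.image Pf).image ff)
          have h2 := Finset.card_image_le (s := Finset.univ.image Pf) (f := ee)
          have h3 := Finset.card_image_le (s := Finset.univ.image Pf) (f := ff)
          simp only [hgens]
          omega
end

section
/- Let α ∈ {1,…,2n}^{N₁} be a tuple of activation-pattern indices arising from a parameter θ of a shallow ReLU network on a strictly increasing sample of size n, let ℓ⁰_neurons(α) = |{α₁, α₁−1, …, α_{N₁}, α_{N₁}−1} \ {n, n+1}|, and let A(X,θ) be the set of activation patterns of the sample's points. Then |A(X,θ)| − 2 ≤ ℓ⁰_neurons(α) ≤ 4·|A(X,θ)|. -/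
/-- Comparison between the number of effective neurons `ℓ⁰_neurons(α)` and the number of
activation patterns `|A(X,θ)|` perceived by the sample, for a shallow ReLU network whose
`k`-th hidden neuron realizes the monotone activation pattern `1_{α_k}` (1-based index
convention: indices `1,…,n` are suffix patterns, indices `n+1,…,2n` are prefix patterns):
`|A(X,θ)| − 2 ≤ ℓ⁰_neurons(α) ≤ 4·|A(X,θ)|`. -/
theorem stmt19 (n : ℕ) (hn : 1 ≤ n) (x : Fin n → ℝ) (hx : StrictMono x)
    (N₁ : ℕ) (w b : Fin N₁ → ℝ) (α : Fin N₁ → ℕ)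
    (hα : ∀ k, 1 ≤ α k ∧ α k ≤ 2 * n)
    (hlink : ∀ k, ∀ j : Fin n,
      (0 ≤ w k * x j + b k) ↔
        (if α k ≤ n then α k ≤ (j : ℕ) + 1 else (j : ℕ) + 1 < α k - n)) :
    let ℓ0 := (((Finset.univ.image α) ∪ (Finset.univ.image (fun k => α k - 1))) \
      ({n, n + 1} : Finset ℕ)).card
    let Acard := (Finset.univ.image
      (fun j : Fin n => fun k : Fin N₁ => decide (0 ≤ w k * x j + b k))).card
    Acard - 2 ≤ ℓ0 ∧ ℓ0 ≤ 4 * Acard := by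
  classical
  intro ℓ0 Acard
  set c : Fin n → Fin N₁ → Bool := fun j k => decide (0 ≤ w k * x j + b k) with hc
  have hck : ∀ (j : Fin n) (k : Fin N₁),
      c j k = true ↔ (if α k ≤ n then α k ≤ (j : ℕ) + 1 else (j : ℕ) + 1 < α k - n) := by
    intro j k
    simp only [hc, decide_eq_true_iff]
    exact hlink k j
  set V : Finset ℕ := Finset.univ.image α with hV
  set A1 : Finset ℕ := V.filter (fun v => 2 ≤ v ∧ v ≤ n) with hA1def
  set A2 : Finset ℕ := (V.filter (fun v => n + 2 ≤ v)).image (fun v => v - n) with hA2def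
  set T : Finset ℕ := A1 ∪ A2 with hTdef
  have hTmem : ∀ t ∈ T, 2 ≤ t ∧ t ≤ n := by
    intro t ht
    rw [hTdef, Finset.mem_union] at ht
    rcases ht with ht | ht
    · rw [hA1def, Finset.mem_filter] at ht; exact ht.2
    · rw [hA2def, Finset.mem_image] at ht
      obtain ⟨v, hv, rfl⟩ := ht
      rw [Finset.mem_filter, hV, Finset.mem_image] at hv
      obtain ⟨⟨k, -, rfl⟩, hk2⟩ := hv
      have := (hα k).2
      omega
  -- for each threshold there is a neuron flipping at it
  have hdiff : ∀ t ∈ T, ∀ j j' : Fin n, (j : ℕ) + 1 < t → t ≤ (j' : ℕ) + 1 → c j ≠ c j' := by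
    intro t ht j j' hj hj' hcc
    rw [hTdef, Finset.mem_union] at ht
    rcases ht with ht | ht
    · rw [hA1def, Finset.mem_filter, hV, Finset.mem_image] at ht
      obtain ⟨⟨k, -, rfl⟩, h2, hn'⟩ := ht
      have hiff : (c j k = true) ↔ (c j' k = true) := by rw [hcc]
      rw [hck, hck, if_pos hn', if_pos hn'] at hiff
      omega
    · rw [hA2def, Finset.mem_image] at ht
      obtain ⟨v, hv, rfl⟩ := ht
      rw [Finset.mem_filter, hV, Finset.mem_image] at hv
      obtain ⟨⟨k, -, rfl⟩, hk2⟩ := hv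
      have hnn : ¬ (α k ≤ n) := by omega
      have hiff : (c j k = true) ↔ (c j' k = true) := by rw [hcc]
      rw [hck, hck, if_neg hnn, if_neg hnn] at hiff
      omega
  -- columns are determined by the set of thresholds below the point
  have heq : ∀ j j' : Fin n,
      T.filter (fun t => t ≤ (j : ℕ) + 1) = T.filter (fun t => t ≤ (j' : ℕ) + 1) →
      c j = c j' := by
    intro j j' hf
    funext k
    rw [Bool.eq_iff_iff, hck, hck]
    by_cases hkn : α k ≤ n
    · rw [if_pos hkn, if_pos hkn]
      rcases Nat.lt_or_ge (α k) 2 with h2 | h2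
      · have := (hα k).1
        constructor <;> intro <;> omega
      · have hmemT : α k ∈ T := by
          rw [hTdef, Finset.mem_union]
          left
          rw [hA1def, Finset.mem_filter]
          exact ⟨Finset.mem_image_of_mem α (Finset.mem_univ k), h2, hkn⟩
        constructor
        · intro hle
          have hm : α k ∈ T.filter (fun t => t ≤ (j : ℕ) + 1) :=
            Finset.mem_filter.2 ⟨hmemT, hle⟩
          rw [hf] at hm
          exact (Finset.mem_filter.1 hm).2
        · intro hle
          have hm : α k ∈ T.filter (fun t => t ≤ (j' : ℕ) + 1) :=
            Finset.mem_filter.2 ⟨hmemT, hle⟩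
          rw [← hf] at hm
          exact (Finset.mem_filter.1 hm).2
    · rw [if_neg hkn, if_neg hkn]
      rcases Nat.lt_or_ge (α k) (n + 2) with h2 | h2
      · constructor <;> intro <;> omega
      · have hmemT : α k - n ∈ T := by
          rw [hTdef, Finset.mem_union]
          right
          rw [hA2def, Finset.mem_image]
          exact ⟨α k, Finset.mem_filter.2
            ⟨Finset.mem_image_of_mem α (Finset.mem_univ k), h2⟩, rfl⟩
        constructor
        · intro hlt
          by_contra hlt'
          have hm : α k - n ∈ T.filter (fun t => t ≤ (j' : ℕ) + 1) :=
            Finset.mem_filter.2 ⟨hmemT, by omega⟩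
          rw [← hf] at hm
          have := (Finset.mem_filter.1 hm).2
          omega
        · intro hlt
          by_contra hlt'
          have hm : α k - n ∈ T.filter (fun t => t ≤ (j : ℕ) + 1) :=
            Finset.mem_filter.2 ⟨hmemT, by omega⟩
          rw [hf] at hm
          have := (Finset.mem_filter.1 hm).2
          omega
  set hfun : Fin n → ℕ := fun j => (T.filter (fun t => t ≤ (j : ℕ) + 1)).card with hhfun
  have hmono : ∀ j j' : Fin n, (j : ℕ) ≤ (j' : ℕ) →
      T.filter (fun t => t ≤ (j : ℕ) + 1) ⊆ T.filter (fun t => t ≤ (j' : ℕ) + 1) := by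
    intro j j' hjj t ht
    rw [Finset.mem_filter] at ht ⊢
    exact ⟨ht.1, by omega⟩
  have hcards : ∀ j j', hfun j = hfun j' → c j = c j' := by
    intro j j' hh
    rcases le_total (j : ℕ) (j' : ℕ) with hle | hle
    · exact heq j j' (Finset.eq_of_subset_of_card_le (hmono j j' hle) (le_of_eq hh.symm))
    · exact (heq j' j (Finset.eq_of_subset_of_card_le (hmono j' j hle) (le_of_eq hh))).symm
  have hAc : Acard = (Finset.univ.image c).card := rfl
  -- L1 : Acard ≤ T.card + 1
  have L1 : Acard ≤ T.card + 1 := by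
    rw [hAc]
    have step1 : (Finset.univ.image c).card ≤ (Finset.univ.image hfun).card := by
      apply Finset.card_le_card_of_injOn
        (fun col => if h : ∃ j, c j = col then hfun h.choose else 0)
      · intro col hcol
        rw [Finset.mem_coe, Finset.mem_image] at hcol
        obtain ⟨j, -, hj⟩ := hcol
        have hex : ∃ i, c i = col := ⟨j, hj⟩
        dsimp only; rw [dif_pos hex]
        exact Finset.mem_image_of_mem _ (Finset.mem_univ _)
      · intro col hcol col' hcol' hff
        simp only [Finset.coe_image, Set.mem_image, Finset.mem_coe] at hcol hcol'
        obtain ⟨j, -, hj⟩ := hcol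
        obtain ⟨j', -, hj'⟩ := hcol'
        have hex : ∃ i, c i = col := ⟨j, hj⟩
        have hex' : ∃ i, c i = col' := ⟨j', hj'⟩
        dsimp only at hff
        rw [dif_pos hex, dif_pos hex'] at hff
        rw [← hex.choose_spec, ← hex'.choose_spec]
        exact hcards _ _ hff
    have step2 : (Finset.univ.image hfun).card ≤ T.card + 1 := by
      have hsub : Finset.univ.image hfun ⊆ Finset.range (T.card + 1) := by
        intro m hm
        rw [Finset.mem_image] at hm
        obtain ⟨j, -, rfl⟩ := hm
        rw [Finset.mem_range, Nat.lt_succ_iff]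
        exact Finset.card_le_card (Finset.filter_subset _ _)
      calc (Finset.univ.image hfun).card ≤ (Finset.range (T.card + 1)).card :=
            Finset.card_le_card hsub
        _ = T.card + 1 := Finset.card_range _
    exact le_trans step1 step2
  -- L2 : T.card + 1 ≤ Acard
  have L2 : T.card + 1 ≤ Acard := by
    rw [hAc]
    have h1T : (1 : ℕ) ∉ T := fun h => by have := hTmem 1 h; omega
    have hins : (insert 1 T).card = T.card + 1 := Finset.card_insert_of_notMem h1T
    rw [← hins]
    set f : ℕ → (Fin N₁ → Bool) := fun t => c ⟨min (t - 1) (n - 1), by omega⟩ with hfdef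
    have key : ∀ a b : ℕ, a ∈ insert 1 T → b ∈ insert 1 T → a < b → f a ≠ f b := by
      intro a' b' ha hb hab
      have hbT : b' ∈ T := by
        rcases Finset.mem_insert.1 hb with rfl | h
        · exfalso
          rcases Finset.mem_insert.1 ha with rfl | h
          · omega
          · have := hTmem a' h; omega
        · exact h
      have hb2 := hTmem b' hbT
      have ha1 : 1 ≤ a' ∧ a' ≤ n := by
        rcases Finset.mem_insert.1 ha with rfl | h
        · exact ⟨le_refl 1, hn⟩
        · have := hTmem a' h; omega
      apply hdiff b' hbT
      · show min (a' - 1) (n - 1) + 1 < b'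
        omega
      · show b' ≤ min (b' - 1) (n - 1) + 1
        omega
    apply Finset.card_le_card_of_injOn f
    · intro t ht
      exact Finset.mem_image_of_mem _ (Finset.mem_univ _)
    · intro t ht t' ht' hff
      by_contra hne
      rcases lt_or_gt_of_ne hne with h | h
      · exact key t t' (Finset.mem_coe.1 ht) (Finset.mem_coe.1 ht') h hff
      · exact key t' t (Finset.mem_coe.1 ht') (Finset.mem_coe.1 ht) h hff.symm
  set W : Finset ℕ := Finset.univ.image (fun k => α k - 1) with hW
  set S : Finset ℕ := (V ∪ W) \ ({n, n + 1} : Finset ℕ) with hS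
  have hℓ0 : ℓ0 = S.card := rfl
  -- L3 : T.card ≤ S.card
  have L3 : T.card ≤ S.card := by
    apply Finset.card_le_card_of_injOn (fun t => if t ∈ A1 then t - 1 else t + n)
    · intro t ht
      have htT := Finset.mem_coe.1 ht
      by_cases h1 : t ∈ A1
      · dsimp only; rw [if_pos h1, Finset.mem_coe]
        rw [hA1def, Finset.mem_filter] at h1
        obtain ⟨hv, h2, hn'⟩ := h1
        rw [hV, Finset.mem_image] at hv
        obtain ⟨k, -, rfl⟩ := hv
        rw [hS, Finset.mem_sdiff]
        constructor
        · rw [Finset.mem_union]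
          right
          rw [hW, Finset.mem_image]
          exact ⟨k, Finset.mem_univ k, rfl⟩
        · simp only [Finset.mem_insert, Finset.mem_singleton]
          omega
      · dsimp only; rw [if_neg h1, Finset.mem_coe]
        have h2 : t ∈ A2 := by
          rw [hTdef, Finset.mem_union] at htT
          rcases htT with h | h
          · exact absurd h h1
          · exact h
        rw [hA2def, Finset.mem_image] at h2
        obtain ⟨v, hv, rfl⟩ := h2
        rw [Finset.mem_filter] at hv
        obtain ⟨hvV, hv2⟩ := hv
        have hvn : v - n + n = v := by omega
        rw [hvn, hS, Finset.mem_sdiff]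
        refine ⟨Finset.mem_union.2 (Or.inl hvV), ?_⟩
        simp only [Finset.mem_insert, Finset.mem_singleton]
        omega
    · intro t ht t' ht' hff
      have hb := hTmem t (Finset.mem_coe.1 ht)
      have hb' := hTmem t' (Finset.mem_coe.1 ht')
      dsimp only at hff
      split_ifs at hff <;> omega
  -- L4 : S.card ≤ 4 * (T.card + 1)
  have L4 : S.card ≤ 4 * (T.card + 1) := by
    have hWV : W.card ≤ V.card := by
      have himg : W = V.image (fun v => v - 1) := by
        rw [hW, hV, Finset.image_image]
        rfl
      rw [himg]
      exact Finset.card_image_le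
    have hVT : V.card ≤ 2 * T.card + 2 := by
      have hsub : V ⊆ A1 ∪ (V.filter (fun v => n + 2 ≤ v)) ∪ {1, n + 1} := by
        intro v hv
        have hv' := hv
        rw [hV, Finset.mem_image] at hv'
        obtain ⟨k, -, rfl⟩ := hv'
        have hvb := hα k
        have hcase : α k = 1 ∨ (2 ≤ α k ∧ α k ≤ n) ∨ α k = n + 1 ∨ n + 2 ≤ α k := by omega
        rcases hcase with h | h | h | h
        · exact Finset.mem_union_right _ (by simp [h])
        · exact Finset.mem_union_left _ (Finset.mem_union_left _
            (by rw [hA1def, Finset.mem_filter]; exact ⟨hv, h⟩))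
        · exact Finset.mem_union_right _ (by simp [h])
        · exact Finset.mem_union_left _ (Finset.mem_union_right _
            (Finset.mem_filter.2 ⟨hv, h⟩))
      have hc2 : (V.filter (fun v => n + 2 ≤ v)).card = A2.card := by
        rw [hA2def]
        exact (Finset.card_image_of_injOn (fun a ha b' hb hab => by
          rw [Finset.mem_coe, Finset.mem_filter] at ha hb
          omega)).symm
      have hA1T : A1.card ≤ T.card := Finset.card_le_card (by rw [hTdef]; exact Finset.subset_union_left)
      have hA2T : A2.card ≤ T.card := Finset.card_le_card (by rw [hTdef]; exact Finset.subset_union_right)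
      have hpair : ({1, n + 1} : Finset ℕ).card ≤ 2 := by
        apply le_trans (Finset.card_insert_le _ _)
        simp
      calc V.card ≤ (A1 ∪ (V.filter (fun v => n + 2 ≤ v)) ∪ {1, n + 1}).card :=
            Finset.card_le_card hsub
        _ ≤ (A1 ∪ (V.filter (fun v => n + 2 ≤ v))).card + ({1, n + 1} : Finset ℕ).card :=
            Finset.card_union_le _ _
        _ ≤ A1.card + (V.filter (fun v => n + 2 ≤ v)).card + ({1, n + 1} : Finset ℕ).card :=
            by have := Finset.card_union_le A1 (V.filter (fun v => n + 2 ≤ v)); omega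
        _ ≤ 2 * T.card + 2 := by omega
    calc S.card ≤ (V ∪ W).card := Finset.card_le_card (by rw [hS]; exact Finset.sdiff_subset)
      _ ≤ V.card + W.card := Finset.card_union_le _ _
      _ ≤ 4 * (T.card + 1) := by omega
  refine ⟨by omega, by omega⟩
end
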